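/- For every λ ∈ ℂ \ [−1,1]: Re β(λ) = (1/(2π))·arg((λ+1)/(λ−1)) and Im β(λ) = (1/(2π))·ln|(λ−1)/(λ+1)|; consequently |Re β(λ)| < 1/2, and moreover |Re β(λ)| < 1/4 if and only if |λ| > 1. -/

import Mathlib

/-- `β(λ) = (1/(2πi))·Log((λ+1)/(λ−1))`, with the principal branch of `Log`. -/
noncomputable def betaFn (lam : ℂ) : ℂ :=
  (1 / (2 * (Real.pi : ℂ) * Complex.I)) * Complex.log ((lam + 1) / (lam - 1))

/-- for `λ ∈ ℂ \ [−1,1]`: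
    `Re β = (1/(2π))·arg((λ+1)/(λ−1))`, `Im β = (1/(2π))·ln|(λ−1)/(λ+1)|`,
    `|Re β| < 1/2`, and `|Re β| < 1/4 ↔ |λ| > 1`. -/
theorem re_im_beta (lam : ℂ)
    (hlam : lam ∉ (Complex.ofReal '' Set.Icc (-1 : ℝ) 1)) :
    (betaFn lam).re = (1 / (2 * Real.pi)) * Complex.arg ((lam + 1) / (lam - 1)) ∧
    (betaFn lam).im = (1 / (2 * Real.pi)) * Real.log ‖(lam - 1) / (lam + 1)‖ ∧
    |(betaFn lam).re| < 1 / 2 ∧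
    (|(betaFn lam).re| < 1 / 4 ↔ 1 < ‖lam‖) := by
  have hπ : (0:ℝ) < Real.pi := Real.pi_pos
  have hnotin : ¬(lam.im = 0 ∧ -1 ≤ lam.re ∧ lam.re ≤ 1) := by
    rintro ⟨h0, h1, h2⟩
    exact hlam ⟨lam.re, ⟨h1, h2⟩, Complex.ext rfl h0.symm⟩
  have h1 : lam ≠ 1 := by
    rintro rfl; exact hnotin ⟨rfl, by norm_num, by norm_num⟩
  have hm1 : lam ≠ -1 := by
    rintro rfl; exact hnotin ⟨by simp, by norm_num, by norm_num⟩
  have hd : lam - 1 ≠ 0 := sub_ne_zero.mpr h1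
  have hn : lam + 1 ≠ 0 := by
    intro h; apply hm1; linear_combination h
  set w : ℂ := (lam + 1) / (lam - 1) with hw
  have hw0 : w ≠ 0 := div_ne_zero hn hd
  have hc : (1 / (2 * (Real.pi : ℂ) * Complex.I)) = ((1/(2*Real.pi) : ℝ) : ℂ) * (-Complex.I) := by
    have hI : Complex.I ≠ 0 := Complex.I_ne_zero
    have hπc : (Real.pi : ℂ) ≠ 0 := by exact_mod_cast Real.pi_ne_zero
    push_cast
    field_simp
    linear_combination Complex.I_sq
  have hβ : betaFn lam = ((1/(2*Real.pi) : ℝ) : ℂ) * (-Complex.I) * Complex.log w := by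
    rw [betaFn, hc, hw]
  have hre : (betaFn lam).re = (1/(2*Real.pi)) * Complex.arg w := by
    rw [hβ]
    simp [Complex.mul_re, Complex.mul_im, Complex.log_re, Complex.log_im]
  have him : (betaFn lam).im = -((1/(2*Real.pi)) * Real.log ‖w‖) := by
    rw [hβ]
    simp [Complex.mul_re, Complex.mul_im, Complex.log_re, Complex.log_im]
  have hinv : (lam - 1) / (lam + 1) = w⁻¹ := by
    rw [hw]; field_simp
  have him' : (betaFn lam).im = (1 / (2 * Real.pi)) * Real.log ‖(lam - 1) / (lam + 1)‖ := by
    rw [him, hinv, norm_inv, Real.log_inv]; ring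
  -- real/imaginary parts of w
  have hns : (0:ℝ) < Complex.normSq (lam - 1) := Complex.normSq_pos.mpr hd
  have hwim : w.im = (-2 * lam.im) / Complex.normSq (lam - 1) := by
    rw [hw]
    simp only [Complex.div_im, Complex.add_re, Complex.add_im, Complex.sub_re,
      Complex.sub_im, Complex.one_re, Complex.one_im]
    ring
  have hwre : w.re = (Complex.normSq lam - 1) / Complex.normSq (lam - 1) := by
    rw [hw]
    simp only [Complex.div_re, Complex.add_re, Complex.add_im, Complex.sub_re,
      Complex.sub_im, Complex.one_re, Complex.one_im, Complex.normSq_apply]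
    ring
  -- arg w ≠ π
  have hargne : Complex.arg w ≠ Real.pi := by
    intro h
    obtain ⟨hr, hi⟩ := Complex.arg_eq_pi_iff.mp h
    have him0 : lam.im = 0 := by
      rw [hwim] at hi
      have := (div_eq_zero_iff.mp hi).resolve_right (ne_of_gt hns)
      linarith
    have hsq : Complex.normSq lam - 1 < 0 := by
      rw [hwre] at hr
      by_contra hcon
      push_neg at hcon
      have : 0 ≤ w.re := by rw [hwre]; positivity
      rw [hwre] at this
      nlinarith
    have : lam.re ^ 2 < 1 := by
      have := Complex.normSq_apply lam
      nlinarith [sq_nonneg lam.im]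
    exact hnotin ⟨him0, by nlinarith, by nlinarith⟩
  have hargabs : |Complex.arg w| < Real.pi := by
    rw [abs_lt]
    exact ⟨Complex.neg_pi_lt_arg w, lt_of_le_of_ne (Complex.arg_le_pi w) hargne⟩
  have habseq : |(betaFn lam).re| = |Complex.arg w| / (2*Real.pi) := by
    rw [hre, abs_mul, abs_of_pos (by positivity : (0:ℝ) < 1/(2*Real.pi))]
    ring
  have hhalf : |(betaFn lam).re| < 1/2 := by
    rw [habseq, div_lt_iff₀ (by positivity)]
    linarith
  have habsle : 1 < ‖lam‖ ↔ 1 < Complex.normSq lam := by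
    rw [← Complex.sq_norm]
    constructor <;> intro h <;> nlinarith [norm_nonneg lam]
  refine ⟨hre, him', hhalf, ?_⟩
  rw [habseq, div_lt_iff₀ (by positivity), habsle]
  have harg2 : |Complex.arg w| < Real.pi / 2 ↔ 0 < w.re ∨ w = 0 :=
    Complex.abs_arg_lt_pi_div_two_iff
  constructor
  · intro h
    have : |Complex.arg w| < Real.pi / 2 := by linarith
    have h0 := (harg2.mp this).resolve_right hw0
    rw [hwre] at h0
    have := (div_pos_iff.mp h0).resolve_right (by push_neg; intro hx; linarith)
    linarith [this.1]
  · intro h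
    have h0 : 0 < w.re := by rw [hwre]; exact div_pos (by linarith) hns
    have := harg2.mpr (Or.inl h0)
    linarith
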